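/- For every integer k ≥ 1 and every tree T with k·n vertices, the vertex set of T can be partitioned into k sets of size n each, each carrying a tree structure whose every edge joins two vertices at distance at most 3 in T. -/

import Mathlib

open SimpleGraph List

set_option linter.unusedSectionVars false
set_option linter.unusedVariables false
set_option maxHeartbeats 1000000

section Aux



lemma pathGraph_walk_edge {n : ℕ} {u v a b : Fin n} (huv : u.val + 1 = v.val)
    (p : (SimpleGraph.pathGraph n).Walk a b) (ha : a.val ≤ u.val) (hb : u.val < b.val) :
    s(u, v) ∈ p.edges := by
  induction p with
  | nil => omega
  | @cons x c y h q ih =>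
    rw [SimpleGraph.pathGraph_adj] at h
    rw [SimpleGraph.Walk.edges_cons]
    by_cases hc : c.val ≤ u.val
    · exact List.mem_cons_of_mem _ (ih hc hb)
    · have hx : x = u := Fin.ext (by omega)
      have hcv : c = v := Fin.ext (by omega)
      subst hx; subst hcv
      exact List.mem_cons_self

lemma pathGraph_isTree {n : ℕ} (hn : 1 ≤ n) : (SimpleGraph.pathGraph n).IsTree := by
  obtain ⟨m, rfl⟩ : ∃ m, n = m + 1 := ⟨n - 1, by omega⟩
  constructor
  · exact SimpleGraph.pathGraph_connected m
  · rw [SimpleGraph.isAcyclic_iff_forall_adj_isBridge]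
    intro u v h
    rw [SimpleGraph.isBridge_iff_adj_and_forall_walk_mem_edges]
    refine fun p => ?_
    rw [SimpleGraph.pathGraph_adj] at h
    rcases h with h | h
    · exact pathGraph_walk_edge h p (le_refl _) (by omega)
    · have h2 := pathGraph_walk_edge h p.reverse (le_refl _) (by omega)
      rw [SimpleGraph.Walk.edges_reverse, List.mem_reverse] at h2
      rwa [Sym2.eq_swap]

lemma isTree_iso {V W : Type*} {G : SimpleGraph V} {H : SimpleGraph W} (e : G ≃g H)
    (h : G.IsTree) : H.IsTree := by
  constructor
  · exact (SimpleGraph.Iso.connected_iff e).1 h.isConnected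
  · intro x c hc
    have hc' : (c.map e.symm.toHom).IsCycle :=
      SimpleGraph.Walk.IsCycle.map (f := e.symm.toHom) (e.symm.toEquiv.injective) hc
    exact h.IsAcyclic _ hc'


variable {V : Type*} [DecidableEq V] {G : SimpleGraph V}

noncomputable def tpath (hG : G.IsTree) (x y : V) : G.Walk x y :=
  (hG.existsUnique_path x y).exists.choose

lemma tpath_isPath (hG : G.IsTree) (x y : V) : (tpath hG x y).IsPath :=
  (hG.existsUnique_path x y).exists.choose_spec

lemma tpath_eq (hG : G.IsTree) {x y : V} (p : G.Walk x y) (hp : p.IsPath) :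
    p = tpath hG x y :=
  (hG.existsUnique_path x y).unique hp (tpath_isPath hG x y)

lemma support_tpath_self (hG : G.IsTree) (x : V) : (tpath hG x x).support = [x] := by
  rw [← tpath_eq hG SimpleGraph.Walk.nil SimpleGraph.Walk.IsPath.nil]
  rfl

lemma tpath_adj (hG : G.IsTree) {x y : V} (h : G.Adj x y) :
    tpath hG x y = SimpleGraph.Walk.cons h SimpleGraph.Walk.nil := by
  refine (tpath_eq hG _ ?_).symm
  exact SimpleGraph.Walk.IsPath.nil.cons (by simp [h.ne])

lemma support_tpath_adj (hG : G.IsTree) {x y : V} (h : G.Adj x y) :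
    (tpath hG x y).support = [x, y] := by
  rw [tpath_adj hG h]; rfl

lemma tpath_reverse (hG : G.IsTree) (x y : V) :
    (tpath hG x y).reverse = tpath hG y x :=
  tpath_eq hG _ ((tpath_isPath hG x y).reverse)

lemma mem_tpath_symm (hG : G.IsTree) {x y z : V} (h : z ∈ (tpath hG x y).support) :
    z ∈ (tpath hG y x).support := by
  rw [← tpath_reverse hG x y, SimpleGraph.Walk.support_reverse, List.mem_reverse]
  exact h

/-- tripod: anything on the path x→y is on the path x→u or on the path y→u. -/
lemma tpath_tripod (hG : G.IsTree) {x y z : V} (u : V)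
    (hz : z ∈ (tpath hG x y).support) :
    z ∈ (tpath hG x u).support ∨ z ∈ (tpath hG y u).support := by
  set w : G.Walk x y := (tpath hG x u).append (tpath hG y u).reverse with hw
  have hb : w.bypass = tpath hG x y := tpath_eq hG _ w.bypass_isPath
  have hz' : z ∈ w.support := w.support_bypass_subset (hb ▸ hz)
  rw [hw, SimpleGraph.Walk.mem_support_append_iff] at hz'
  rcases hz' with h | h
  · exact Or.inl h
  · right; rwa [SimpleGraph.Walk.support_reverse, List.mem_reverse] at h

/-- if z is on the path x→u then the path z→u is contained in the path x→u. -/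
lemma tpath_drop_subset (hG : G.IsTree) {x u z : V} (hz : z ∈ (tpath hG x u).support) :
    (tpath hG z u).support ⊆ (tpath hG x u).support := by
  have h1 : (tpath hG x u).dropUntil z hz = tpath hG z u :=
    (tpath_eq hG _ ((tpath_isPath hG x u).dropUntil hz))
  rw [← h1]
  exact SimpleGraph.Walk.support_dropUntil_subset _ hz

/-- The core lemma: a "closed" vertex set of a tree, together with an edge u-v inside it,
admits a Hamiltonian ordering of the set from u to v with consecutive jumps of ≤ 3. -/
lemma core [Fintype V] (hG : G.IsTree) :
    ∀ S : Finset V,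
      (∀ x ∈ S, ∀ y ∈ S, ∀ p : G.Walk x y, p.IsPath → ∀ z ∈ p.support, z ∈ S) →
      ∀ u v : V, u ∈ S → v ∈ S → G.Adj u v →
      ∃ l : List V, l.Chain' (fun a b => ∃ p : G.Walk a b, p.length ≤ 3) ∧
        l.Nodup ∧ l.toFinset = S ∧ l.head? = some u ∧ l.getLast? = some v := by
  intro S
  induction S using Finset.strongInduction with
  | _ S ih =>
  intro hcl u v hu hv huv
  classical
  -- the generic half-block construction
  have block : ∀ a b : V, G.Adj a b → a ∈ S → b ∈ S →
      ∃ (l : List V) (e : V) (q : G.Walk e a), q.length ≤ 1 ∧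
        l.Chain' (fun a b => ∃ p : G.Walk a b, p.length ≤ 3) ∧ l.Nodup ∧
        l.toFinset = S.filter (fun w => b ∉ (tpath hG w a).support) ∧
        l.head? = some a ∧ l.getLast? = some e := by
    intro a b hab ha hb
    set T := S.filter (fun w => b ∉ (tpath hG w a).support) with hT
    have haT : a ∈ T := by
      rw [hT, Finset.mem_filter]
      refine ⟨ha, ?_⟩
      rw [support_tpath_self hG a]
      simp [hab.ne']
    have hbT : b ∉ T := by
      rw [hT, Finset.mem_filter]
      intro ⟨_, hcon⟩
      exact hcon ((tpath hG b a).start_mem_support)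
    have hTsub : T ⊆ S := Finset.filter_subset _ _
    have hTS : T ⊂ S := Finset.ssubset_iff_of_subset hTsub |>.2 ⟨b, hb, hbT⟩
    -- closedness of T
    have hclT : ∀ x ∈ T, ∀ y ∈ T, ∀ p : G.Walk x y, p.IsPath → ∀ z ∈ p.support, z ∈ T := by
      intro x hx y hy p hp z hz
      rw [hT, Finset.mem_filter] at hx hy ⊢
      refine ⟨hcl x hx.1 y hy.1 p hp z hz, ?_⟩
      rw [tpath_eq hG p hp] at hz
      rcases tpath_tripod hG a hz with h | h
      · exact fun hmem => hx.2 (tpath_drop_subset hG h hmem)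
      · exact fun hmem => hy.2 (tpath_drop_subset hG h hmem)
    by_cases hTa : T = {a}
    · refine ⟨[a], a, SimpleGraph.Walk.nil, by simp, List.isChain_singleton _, by simp, ?_, rfl, rfl⟩
      simp [hTa]
    · -- find a neighbor a' of a inside T
      obtain ⟨w, hwT, hwa⟩ : ∃ w ∈ T, w ≠ a := by
        by_contra hcon
        push_neg at hcon
        exact hTa (Finset.eq_singleton_iff_unique_mem.2 ⟨haT, hcon⟩)
      obtain ⟨a', hadj, q, hq⟩ := SimpleGraph.Walk.exists_eq_cons_of_ne
        (Ne.symm hwa) (tpath hG a w)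
      have ha'mem : a' ∈ (tpath hG a w).support := by
        rw [hq]; simp [SimpleGraph.Walk.support_cons]
      have hbw : b ∉ (tpath hG a w).support := by
        intro hmem
        have := mem_tpath_symm hG hmem
        rw [hT, Finset.mem_filter] at hwT
        exact hwT.2 this
      have ha'T : a' ∈ T := by
        rw [hT, Finset.mem_filter]
        constructor
        · exact hcl a ha w (hTsub hwT) (tpath hG a w) (tpath_isPath hG a w) a' ha'mem
        · rw [support_tpath_adj hG hadj.symm]
          intro hmem
          rcases List.mem_pair.1 hmem with h | h
          · exact hbw (h ▸ ha'mem)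
          · exact hab.ne' h
      obtain ⟨l, hchain, hnodup, hfin, hhead, hlast⟩ :=
        ih T hTS hclT a a' haT ha'T hadj
      exact ⟨l, a', SimpleGraph.Walk.cons hadj.symm SimpleGraph.Walk.nil, by simp,
        hchain, hnodup, hfin, hhead, hlast⟩
  -- the two half blocks
  obtain ⟨l₁, e, q₁, hq₁, hc₁, hn₁, hf₁, hh₁, hl₁⟩ := block u v huv hu hv
  obtain ⟨l₂, f, q₂, hq₂, hc₂, hn₂, hf₂, hh₂, hl₂⟩ := block v u huv.symm hv hu
  -- facts about the two filters
  have hdisj : ∀ w, w ∈ S.filter (fun w => v ∉ (tpath hG w u).support) →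
      w ∈ S.filter (fun w => u ∉ (tpath hG w v).support) → False := by
    intro w h1 h2
    rw [Finset.mem_filter] at h1 h2
    have hvs : v ∉ (tpath hG w u).support := h1.2
    set q : G.Walk w v := (tpath hG w u).concat huv with hqdef
    have hqpath : q.IsPath := by
      rw [SimpleGraph.Walk.isPath_def, hqdef, SimpleGraph.Walk.support_concat]
      refine List.Nodup.append ((tpath_isPath hG w u).support_nodup) (by simp) ?_
      simp only [List.disjoint_singleton]
      exact hvs
    have : q = tpath hG w v := tpath_eq hG q hqpath
    apply h2.2
    rw [← this, hqdef, SimpleGraph.Walk.support_concat]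
    exact List.mem_append_left _ ((tpath hG w u).end_mem_support)
  have hcover : ∀ w ∈ S, w ∉ S.filter (fun w => v ∉ (tpath hG w u).support) →
      w ∈ S.filter (fun w => u ∉ (tpath hG w v).support) := by
    intro w hw hnot
    rw [Finset.mem_filter] at hnot ⊢
    push_neg at hnot
    have hvmem : v ∈ (tpath hG w u).support := hnot hw
    refine ⟨hw, ?_⟩
    -- split the path w→u at v
    have hspec := SimpleGraph.Walk.take_spec (tpath hG w u) hvmem
    have htake : (tpath hG w u).takeUntil v hvmem = tpath hG w v :=
      tpath_eq hG _ ((tpath_isPath hG w u).takeUntil hvmem)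
    have hnd := (tpath_isPath hG w u).support_nodup
    rw [← hspec, SimpleGraph.Walk.support_append] at hnd
    have hdisj' := List.disjoint_of_nodup_append hnd
    intro humem
    rw [htake] at hdisj'
    apply hdisj' humem
    -- u is in the tail of the support of the dropUntil part
    have hdrop := (tpath hG w u).dropUntil v hvmem
    have hune : u ≠ v := huv.ne
    have hu_end : u ∈ ((tpath hG w u).dropUntil v hvmem).support :=
      SimpleGraph.Walk.end_mem_support _
    rw [SimpleGraph.Walk.support_eq_cons] at hu_end
    rcases List.mem_cons.1 hu_end with h | h
    · exact absurd h hune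
    · exact h
  -- assemble
  refine ⟨l₁ ++ l₂.reverse, ?_, ?_, ?_, ?_, ?_⟩
  · refine List.IsChain.append hc₁ ?_ ?_
    · rw [List.isChain_reverse]
      refine hc₂.imp ?_
      intro x y ⟨p, hp⟩
      exact ⟨p.reverse, by simpa using hp⟩
    · intro x hx y hy
      rw [hl₁, Option.mem_some_iff] at hx
      rw [List.head?_reverse, hl₂, Option.mem_some_iff] at hy
      subst hx; subst hy
      exact ⟨q₁.append (SimpleGraph.Walk.cons huv q₂.reverse), by
        rw [SimpleGraph.Walk.length_append, SimpleGraph.Walk.length_cons, SimpleGraph.Walk.length_reverse]; omega⟩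
  · refine List.Nodup.append hn₁ (List.nodup_reverse.2 hn₂) ?_
    intro x hx1 hx2
    rw [List.mem_reverse] at hx2
    exact hdisj x (hf₁ ▸ List.mem_toFinset.2 hx1) (hf₂ ▸ List.mem_toFinset.2 hx2)
  · rw [List.toFinset_append, List.toFinset_reverse, hf₁, hf₂]
    ext w
    simp only [Finset.mem_union]
    constructor
    · rintro (h | h) <;> exact Finset.filter_subset _ _ h
    · intro hw
      by_cases h : w ∈ S.filter (fun w => v ∉ (tpath hG w u).support)
      · exact Or.inl h
      · exact Or.inr (hcover w hw h)
  · rw [List.head?_append_of_ne_nil]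
    · exact hh₁
    · intro hcon
      rw [hcon] at hh₁
      simp at hh₁
  · rw [List.getLast?_append_of_ne_nil]
    · rw [List.getLast?_reverse]
      exact hh₂
    · intro hcon
      rw [List.reverse_eq_nil_iff] at hcon
      rw [hcon] at hh₂
      simp at hh₂

lemma exists_global_list [Fintype V] (hG : G.IsTree) :
    ∃ l : List V, l.Chain' (fun a b => G.dist a b ≤ 3) ∧ l.Nodup ∧
      l.toFinset = Finset.univ := by
  classical
  have hne : Nonempty V := hG.isConnected.nonempty
  obtain ⟨x⟩ := hne
  by_cases hall : ∀ y : V, y = x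
  · refine ⟨[x], List.isChain_singleton _, by simp, ?_⟩
    ext w; simp [hall w]
  · push_neg at hall
    obtain ⟨y, hy⟩ := hall
    obtain ⟨p⟩ := hG.isConnected.preconnected x y
    obtain ⟨c, hadj, q, hq⟩ := SimpleGraph.Walk.exists_eq_cons_of_ne (Ne.symm hy) p
    obtain ⟨l, hchain, hnodup, hfin, _, _⟩ :=
      core hG Finset.univ (by intros; exact Finset.mem_univ _) x c
        (Finset.mem_univ _) (Finset.mem_univ _) hadj
    refine ⟨l, ?_, hnodup, hfin⟩
    refine hchain.imp ?_
    intro a b ⟨w, hw⟩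
    exact le_trans (SimpleGraph.dist_le w) hw

end Aux


theorem balanced_k_partition_dist_three {V : Type*} [Fintype V] [DecidableEq V]
    (G : SimpleGraph V) (hG : G.IsTree) (k n : ℕ) (hk : 1 ≤ k)
    (hcard : Fintype.card V = k * n) :
    ∃ P : Fin k → Finset V,
      (∀ i j, i ≠ j → Disjoint (P i) (P j)) ∧
      Finset.univ.biUnion P = Finset.univ ∧
      (∀ i, (P i).card = n) ∧
      (∀ i, ∃ H : SimpleGraph {x // x ∈ P i}, H.IsTree ∧
        ∀ u v : {x // x ∈ P i}, H.Adj u v → G.dist u.1 v.1 ≤ 3) := by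
  classical
  have hne : Nonempty V := hG.isConnected.nonempty
  have hn : 1 ≤ n := by
    rcases Nat.eq_zero_or_pos n with h | h
    · exfalso; rw [h, Nat.mul_zero] at hcard
      exact (Fintype.card_pos_iff.2 hne).ne' hcard
    · exact h
  obtain ⟨l, hchain, hnodup, hfin⟩ := exists_global_list hG
  have hlen : l.length = k * n := by
    rw [← List.toFinset_card_of_nodup hnodup, hfin, Finset.card_univ, hcard]
  -- the blocks
  set b : Fin k → List V := fun i => (l.drop (i.val * n)).take n with hb
  have hbl : ∀ i, (b i).length = n := by
    intro i
    rw [hb]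
    simp only [List.length_take, List.length_drop, hlen]
    have h2 : i.val * n + n ≤ k * n := by
      have h3 := Nat.mul_le_mul_right n i.isLt
      rwa [Nat.succ_mul] at h3
    omega
  have hblt : ∀ (i : Fin k) (t : ℕ), t < n → i.val * n + t < l.length := by
    intro i t ht
    have : (i.val + 1) * n ≤ k * n := Nat.mul_le_mul_right n i.isLt
    rw [hlen]; nlinarith [i.isLt]
  have hbget : ∀ (i : Fin k) (t : ℕ) (ht : t < n),
      (b i)[t]'(by rw [hbl]; exact ht) = l[i.val * n + t]'(hblt i t ht) := by
    intro i t ht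
    simp only [hb, List.getElem_take, List.getElem_drop]
  have hbsub : ∀ i, b i <+ l := by
    intro i
    exact List.Sublist.trans (List.take_sublist _ _) (List.drop_sublist _ _)
  have hbnodup : ∀ i, (b i).Nodup := fun i => (hbsub i).nodup hnodup
  have hinj := List.nodup_iff_injective_getElem.1 hnodup
  set P : Fin k → Finset V := fun i => (b i).toFinset with hP
  have hmemP : ∀ (i : Fin k) (x : V), x ∈ P i ↔ ∃ t : ℕ, ∃ ht : t < n,
      l[i.val * n + t]'(hblt i t ht) = x := by
    intro i x
    rw [hP]
    simp only [List.mem_toFinset]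
    rw [List.mem_iff_getElem]
    constructor
    · rintro ⟨t, ht, hx⟩
      have ht' : t < n := by rwa [hbl i] at ht
      exact ⟨t, ht', by rw [← hbget i t ht']; exact hx⟩
    · rintro ⟨t, ht, hx⟩
      exact ⟨t, by rw [hbl i]; exact ht, by rw [hbget i t ht]; exact hx⟩
  refine ⟨P, ?_, ?_, ?_, ?_⟩
  · -- disjoint
    intro i j hij
    rw [Finset.disjoint_left]
    intro x hxi hxj
    obtain ⟨s, hs, hxs⟩ := (hmemP i x).1 hxi
    obtain ⟨t, ht, hxt⟩ := (hmemP j x).1 hxj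
    have := (hnodup.getElem_inj_iff).1 (hxs.trans hxt.symm)
    apply hij
    have hi : i.val = j.val := by
      have h1 : i.val * n + s = j.val * n + t := this
      -- i = (i*n+s)/n etc
      rcases Nat.lt_trichotomy i.val j.val with h | h | h
      · exfalso; nlinarith
      · exact h
      · exfalso; nlinarith
    exact Fin.ext hi
  · -- union
    ext x
    rw [Finset.mem_biUnion]
    simp only [Finset.mem_univ, iff_true]
    have hx : x ∈ l := by
      rw [← List.mem_toFinset, hfin]; exact Finset.mem_univ x
    obtain ⟨m, hm, hxm⟩ := List.mem_iff_getElem.1 hx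
    rw [hlen] at hm
    have hik : m / n < k := Nat.div_lt_iff_lt_mul (by omega) |>.2 (by omega)
    have hmod : m % n < n := Nat.mod_lt _ (by omega)
    have hsum : (⟨m / n, hik⟩ : Fin k).val * n + m % n = m := by
      simp only
      rw [Nat.div_add_mod']
    refine ⟨⟨m / n, hik⟩, trivial, (hmemP _ x).2 ⟨m % n, hmod, ?_⟩⟩
    have hlt := hblt ⟨m / n, hik⟩ (m % n) hmod
    rw [← hxm]
    congr 1
  · -- cards
    intro i
    rw [hP]
    rw [List.toFinset_card_of_nodup (hbnodup i), hbl]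
  · -- trees
    intro i
    have hcardP : Fintype.card {x // x ∈ P i} = n := by
      rw [Fintype.card_coe, hP, List.toFinset_card_of_nodup (hbnodup i), hbl]
    set f : Fin n → {x // x ∈ P i} := fun t =>
      ⟨(b i)[t.val]'(by rw [hbl]; exact t.isLt), by
        rw [hP, List.mem_toFinset]; exact List.getElem_mem _⟩ with hf
    have hfinj : Function.Injective f := by
      intro s t hst
      rw [hf] at hst
      simp only [Subtype.mk.injEq] at hst
      have := ((hbnodup i).getElem_inj_iff).1 hst
      exact Fin.ext this
    have hfbij : Function.Bijective f :=
      (Fintype.bijective_iff_injective_and_card f).2 ⟨hfinj, by simp [hcardP]⟩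
    set e : Fin n ≃ {x // x ∈ P i} := Equiv.ofBijective f hfbij with he
    refine ⟨(SimpleGraph.pathGraph n).map e.toEmbedding, ?_, ?_⟩
    · exact isTree_iso (SimpleGraph.Iso.map e (SimpleGraph.pathGraph n))
        (pathGraph_isTree hn)
    · intro u v huv
      rw [SimpleGraph.map_adj] at huv
      obtain ⟨s, t, hadj, hs, ht⟩ := huv
      have hchain' : ∀ (m : ℕ) (hm : m + 1 < l.length),
          G.dist (l[m]'(by omega)) (l[m+1]'(hm)) ≤ 3 := by
        intro m hm
        have := List.isChain_iff_getElem.1 hchain m (by omega)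
        simpa [List.get_eq_getElem] using this
      have key : ∀ s t : Fin n, s.val + 1 = t.val → G.dist (f s).1 (f t).1 ≤ 3 := by
        intro s t hst
        obtain ⟨tv, htv⟩ := t
        simp only at hst
        subst hst
        rw [hf]
        simp only
        rw [hbget i s.val s.isLt, hbget i (s.val + 1) (by omega)]
        have h2 : (i.val * n + s.val) + 1 < l.length := by
          have := hblt i (s.val + 1) (by omega); omega
        exact hchain' (i.val * n + s.val) h2
      rw [SimpleGraph.pathGraph_adj] at hadj
      have hue : u = f s := by rw [← hs]; rfl
      have hve : v = f t := by rw [← ht]; rfl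
      subst hue; subst hve
      rcases hadj with h | h
      · exact key s t h
      · rw [SimpleGraph.dist_comm]
        exact key t s h
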